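/- Let (Σ,σ) be a finitely primitive Markov subshift on a countable alphabet and let A : Σ → ℝ be a locally Hölder continuous potential such that the Ruelle operator applied to the constant function 1 is uniformly bounded, i.e. sup_{x∈Σ} Σ_{y : σ(y)=x} e^{A(y)} < ∞. Then A is coercive, that is, lim_{i→∞} sup A|_{[i]} = −∞. -/

import Mathlib

open MeasureTheory Filter Topology Set

/-- Membership in the Markov shift: admissible transitions at every coordinate. -/
def InShift (M : ℕ → ℕ → Bool) (x : ℕ → ℕ) : Prop := ∀ j, M (x j) (x (j+1)) = true

/-- The one-sided countable Markov shift `Σ` associated to the transition matrix `M`,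
as a subtype of `ℕ → ℕ` (with the product topology, which is the topology induced by
the metric `d(x,y) = λ^{min{j : x_j ≠ y_j}}`). -/
abbrev ShiftSpace (M : ℕ → ℕ → Bool) := {x : ℕ → ℕ // InShift M x}

/-- The left shift map `σ`. -/
def shiftMap (M : ℕ → ℕ → Bool) (x : ShiftSpace M) : ShiftSpace M :=
  ⟨fun j => x.1 (j+1), fun j => x.2 (j+1)⟩

/-- `Agree M k x y` means the points `x, y` coincide on the first `k` coordinates;
for `k ≥ 1` this is exactly `d(x,y) ≤ λ^k` for the metric of the paper. -/
def Agree (M : ℕ → ℕ → Bool) (k : ℕ) (x y : ShiftSpace M) : Prop :=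
  ∀ j < k, x.1 j = y.1 j

/-- The sets `B_n` of symbols admitting admissible words of length `n+1` starting at them. -/
def BSet (M : ℕ → ℕ → Bool) : ℕ → Set ℕ
  | 0 => {i | ∃ j, M i j = true}
  | n+1 => {i | ∃ j ∈ BSet M n, M i j = true}

/-- `⋂_{n ≥ 0} B_n`. -/
def BInf (M : ℕ → ℕ → Bool) : Set ℕ := ⋂ n, BSet M n

/-- `M` is primitive with connecting set `F` and connection length `K₀`: any two symbols
of `⋂ B_n` can be joined by an admissible word of length `K₀` with all letters in `F`. -/
def Primitive (M : ℕ → ℕ → Bool) (F : Set ℕ) (K₀ : ℕ) : Prop :=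
  ∀ i ∈ BInf M, ∀ j ∈ BInf M, ∃ p : ℕ → ℕ,
    p 0 = i ∧ p (K₀ + 1) = j ∧ (∀ t, 1 ≤ t → t ≤ K₀ → p t ∈ F) ∧
    (∀ t ≤ K₀, M (p t) (p (t+1)) = true)

/-- `A` is locally Hölder continuous with constant `H`:
`Var_k(A) ≤ H ⬝ λ^k` for every `k ≥ 1`. -/
def LocHolder (M : ℕ → ℕ → Bool) (lam H : ℝ) (A : ShiftSpace M → ℝ) : Prop :=
  ∀ k : ℕ, 1 ≤ k → ∀ x y : ShiftSpace M, Agree M k x y → A x - A y ≤ H * lam ^ k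

/-- `A` is coercive: `sup A|_{[i]} → -∞` as `i → ∞`. -/
def Coercive (M : ℕ → ℕ → Bool) (A : ShiftSpace M → ℝ) : Prop :=
  ∀ C : ℝ, ∃ N : ℕ, ∀ i : ℕ, N ≤ i → ∀ x : ShiftSpace M, x.1 0 = i → A x ≤ C

/-- The union of cylinders `⋃_{i ∈ F} [i]`. -/
def FCyl (M : ℕ → ℕ → Bool) (F : Set ℕ) : Set (ShiftSpace M) := {x | x.1 0 ∈ F}

/-- `μ` is a `σ`-invariant Borel probability measure. -/
def InvProb (M : ℕ → ℕ → Bool) (μ : Measure (ShiftSpace M)) : Prop :=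
  IsProbabilityMeasure μ ∧ μ.map (shiftMap M) = μ

/-- The ergodic maximizing value `β_A = sup {∫ A dμ : μ ∈ M_σ}`. -/
noncomputable def betaA (M : ℕ → ℕ → Bool) (A : ShiftSpace M → ℝ) : ℝ :=
  sSup {r | ∃ μ : Measure (ShiftSpace M), InvProb M μ ∧ Integrable A μ ∧ ∫ x, A x ∂μ = r}

/-- The compact subshift `Σ_I` on the finite alphabet `{0, …, I}`. -/
def SpaceI (M : ℕ → ℕ → Bool) (I : ℕ) : Set (ShiftSpace M) := {x | ∀ j, x.1 j ≤ I}

/-- `β_A(I) = max {∫ A dμ : μ ∈ M_σ, supp μ ⊆ Σ_I}`. -/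
noncomputable def betaAI (M : ℕ → ℕ → Bool) (A : ShiftSpace M → ℝ) (I : ℕ) : ℝ :=
  sSup {r | ∃ μ : Measure (ShiftSpace M), InvProb M μ ∧ μ (SpaceI M I) = 1 ∧
    Integrable A μ ∧ ∫ x, A x ∂μ = r}

/-- Birkhoff sum `S_k A`. -/
noncomputable def birkhoff (M : ℕ → ℕ → Bool) (A : ShiftSpace M → ℝ) (k : ℕ)
    (x : ShiftSpace M) : ℝ :=
  ∑ j ∈ Finset.range k, A ((shiftMap M)^[j] x)

/-- The `k`-th variation `Var_k(A)`. -/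
noncomputable def VarK (M : ℕ → ℕ → Bool) (A : ShiftSpace M → ℝ) (k : ℕ) : ℝ :=
  sSup {r | ∃ x y : ShiftSpace M, Agree M k x y ∧ A x - A y = r}

/-- `Var(A) = ∑_{k ≥ 1} Var_k(A)`. -/
noncomputable def VarSum (M : ℕ → ℕ → Bool) (A : ShiftSpace M → ℝ) : ℝ :=
  ∑' k : ℕ, VarK M A (k + 1)

/-- `sup A`. -/
noncomputable def supA (M : ℕ → ℕ → Bool) (A : ShiftSpace M → ℝ) : ℝ :=
  sSup (Set.range A)

/-- `inf A|_{⋃_{i ∈ F} [i]}`. -/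
noncomputable def infF (M : ℕ → ℕ → Bool) (F : Set ℕ) (A : ShiftSpace M → ℝ) : ℝ :=
  sInf (A '' FCyl M F)

/-- The defining set for `u_A(x)`: all values `S_k(A - β_A)(y)` with `σ^k(y) = x`. -/
noncomputable def uASet (M : ℕ → ℕ → Bool) (A : ShiftSpace M → ℝ) (x : ShiftSpace M) :
    Set ℝ :=
  {r | ∃ (k : ℕ) (y : ShiftSpace M), (shiftMap M)^[k] y = x ∧
    birkhoff M A k y - k * betaA M A = r}

/-- The candidate minimal sub-action
`u_A(x) = sup {S_k(A - β_A)(y) : k ≥ 0, σ^k(y) = x}`. -/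
noncomputable def uA (M : ℕ → ℕ → Bool) (A : ShiftSpace M → ℝ) (x : ShiftSpace M) : ℝ :=
  sSup (uASet M A x)

/-- The non-wandering set `Ω(A, I)` with respect to `A|_{Σ_I}`. -/
def NonWandering (M : ℕ → ℕ → Bool) (A : ShiftSpace M → ℝ) (I : ℕ) :
    Set (ShiftSpace M) :=
  {x | x ∈ SpaceI M I ∧ ∀ ε : ℝ, 0 < ε → ∀ m : ℕ,
    ∃ y ∈ SpaceI M I, ∃ n : ℕ, 1 ≤ n ∧ Agree M m x y ∧
      Agree M m x ((shiftMap M)^[n] y) ∧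
      |birkhoff M A n y - n * betaAI M A I| < ε}

lemma shift_iter_coord (M : ℕ → ℕ → Bool) (k : ℕ) (x : ShiftSpace M) (j : ℕ) :
    ((shiftMap M)^[k] x).1 j = x.1 (j + k) := by
  induction k generalizing j with
  | zero => rfl
  | succ k ih =>
    rw [Function.iterate_succ_apply']
    show ((shiftMap M)^[k] x).1 (j + 1) = _
    rw [ih]
    exact congrArg x.1 (by omega)

lemma mem_BSet_of_shift (M : ℕ → ℕ → Bool) (n : ℕ) (x : ShiftSpace M) :
    x.1 0 ∈ BSet M n := by
  induction n generalizing x with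
  | zero => exact ⟨x.1 1, x.2 0⟩
  | succ n ih => exact ⟨x.1 1, ih (shiftMap M x), x.2 0⟩

lemma mem_BInf_of_shift (M : ℕ → ℕ → Bool) (x : ShiftSpace M) :
    x.1 0 ∈ BInf M :=
  Set.mem_iInter.mpr fun n => mem_BSet_of_shift M n x

lemma birkhoff_succ' (M : ℕ → ℕ → Bool) (A : ShiftSpace M → ℝ) (k : ℕ)
    (y : ShiftSpace M) :
    birkhoff M A (k + 1) y = A y + birkhoff M A k (shiftMap M y) := by
  unfold birkhoff
  rw [Finset.sum_range_succ']
  simp [Function.iterate_succ_apply, add_comm]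

lemma sum_exp_birkhoff_le (M : ℕ → ℕ → Bool) (A : ShiftSpace M → ℝ) (C : ℝ)
    (hC : 0 ≤ C)
    (hL : ∀ x : ShiftSpace M, ∀ s : Finset {y : ShiftSpace M // shiftMap M y = x},
      ∑ y ∈ s, Real.exp (A y.1) ≤ C) :
    ∀ (k : ℕ) (z : ShiftSpace M) (s : Finset (ShiftSpace M)),
      (∀ y ∈ s, (shiftMap M)^[k] y = z) →
      ∑ y ∈ s, Real.exp (birkhoff M A k y) ≤ C ^ k := by
  classical
  intro k
  induction k with
  | zero =>
    intro z s hs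
    have hsub : s ⊆ {z} := fun y hy => by simpa using hs y hy
    calc ∑ y ∈ s, Real.exp (birkhoff M A 0 y)
        ≤ ∑ y ∈ ({z} : Finset (ShiftSpace M)), Real.exp (birkhoff M A 0 y) := by
          apply Finset.sum_le_sum_of_subset_of_nonneg hsub
          intro y _ _
          positivity
      _ ≤ 1 := by simp [birkhoff]
      _ = C ^ 0 := by norm_num
  | succ k ih =>
    intro z s hs
    have hmaps : ∀ y ∈ s, shiftMap M y ∈ s.image (shiftMap M) :=
      fun y hy => Finset.mem_image_of_mem _ hy
    have h1 : ∑ y ∈ s, Real.exp (birkhoff M A (k + 1) y)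
        = ∑ w ∈ s.image (shiftMap M),
            ∑ y ∈ s.filter (fun y => shiftMap M y = w),
              Real.exp (birkhoff M A (k + 1) y) :=
      (Finset.sum_fiberwise_of_maps_to hmaps _).symm
    rw [h1]
    have h2 : ∀ w ∈ s.image (shiftMap M),
        ∑ y ∈ s.filter (fun y => shiftMap M y = w),
          Real.exp (birkhoff M A (k + 1) y)
        ≤ C * Real.exp (birkhoff M A k w) := by
      intro w _
      have hterm : ∀ y ∈ s.filter (fun y => shiftMap M y = w),
          Real.exp (birkhoff M A (k + 1) y)
            = Real.exp (A y) * Real.exp (birkhoff M A k w) := by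
        intro y hy
        have hyw : shiftMap M y = w := (Finset.mem_filter.mp hy).2
        rw [birkhoff_succ', hyw, Real.exp_add]
      rw [Finset.sum_congr rfl hterm, ← Finset.sum_mul]
      have hexp : ∑ y ∈ s.filter (fun y => shiftMap M y = w), Real.exp (A y) ≤ C := by
        have hinj : Function.Injective
            (fun y : {a // a ∈ s.filter (fun y => shiftMap M y = w)} =>
              (⟨y.1, (Finset.mem_filter.mp y.2).2⟩ : {y : ShiftSpace M // shiftMap M y = w})) := by
          intro a b hab
          simp only [Subtype.mk.injEq] at hab
          exact Subtype.ext hab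
        have := hL w ((s.filter (fun y => shiftMap M y = w)).attach.map
          ⟨_, hinj⟩)
        rw [Finset.sum_map] at this
        simpa [Finset.sum_attach (s.filter (fun y => shiftMap M y = w))
          (fun y => Real.exp (A y))] using this
      have hpos : 0 < Real.exp (birkhoff M A k w) := Real.exp_pos _
      exact mul_le_mul_of_nonneg_right hexp hpos.le
    calc ∑ w ∈ s.image (shiftMap M),
          ∑ y ∈ s.filter (fun y => shiftMap M y = w),
            Real.exp (birkhoff M A (k + 1) y)
        ≤ ∑ w ∈ s.image (shiftMap M), C * Real.exp (birkhoff M A k w) :=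
          Finset.sum_le_sum h2
      _ = C * ∑ w ∈ s.image (shiftMap M), Real.exp (birkhoff M A k w) := by
          rw [Finset.mul_sum]
      _ ≤ C * C ^ k := by
          apply mul_le_mul_of_nonneg_left _ hC
          apply ih z
          intro w hw
          obtain ⟨y, hy, rfl⟩ := Finset.mem_image.mp hw
          rw [← Function.iterate_succ_apply]
          exact hs y hy
      _ = C ^ (k + 1) := by ring

/-- for a finitely primitive shift and a locally Hölder potential `A`,
if `‖L_A 1‖_∞ < ∞` (i.e. the sums `∑_{σ(y)=x} e^{A(y)}` are uniformly bounded, expressed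
through finite partial sums), then `A` is coercive. -/
theorem ruelle_bounded_implies_coercive
    (M : ℕ → ℕ → Bool) (F : Set ℕ) (K₀ : ℕ) (lam H : ℝ)
    (hlam₀ : 0 < lam) (hlam₁ : lam < 1) (hH : 0 < H)
    (hprim : Primitive M F K₀) (hFfin : F.Finite)
    (A : ShiftSpace M → ℝ)
    (hhold : LocHolder M lam H A)
    (C : ℝ)
    (hL : ∀ x : ShiftSpace M, ∀ s : Finset {y : ShiftSpace M // shiftMap M y = x},
      ∑ y ∈ s, Real.exp (A y.1) ≤ C) :
    Coercive M A := by
  classical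
  intro B
  by_cases hne : Nonempty (ShiftSpace M)
  case neg =>
    exact ⟨0, fun i _ x _ => (hne ⟨x⟩).elim⟩
  obtain ⟨z⟩ := hne
  have hC0 : 0 ≤ C := by simpa using hL z (∅ : Finset _)
  -- a uniform lower bound of A on the cylinders over F
  obtain ⟨m, hm⟩ : ∃ m : ℝ, ∀ w : ShiftSpace M, w.1 0 ∈ F → m ≤ A w := by
    set G : ℕ → ℝ := fun f =>
      if h : ∃ w : ShiftSpace M, w.1 0 = f then A h.choose - H * lam else 0 with hG
    refine ⟨(insert 0 (hFfin.toFinset.image G)).min' ⟨0, Finset.mem_insert_self _ _⟩,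
      fun w hw => ?_⟩
    have hex : ∃ w' : ShiftSpace M, w'.1 0 = w.1 0 := ⟨w, rfl⟩
    have hmem : G (w.1 0) ∈ insert 0 (hFfin.toFinset.image G) :=
      Finset.mem_insert_of_mem
        (Finset.mem_image_of_mem G (hFfin.mem_toFinset.mpr hw))
    have hmin := Finset.min'_le _ _ hmem
    have hGval : G (w.1 0) = A hex.choose - H * lam := by
      rw [hG]; simp only [dif_pos hex]
    have hagree : Agree M 1 hex.choose w := by
      intro j hj
      interval_cases j
      exact hex.choose_spec
    have hhold1 := hhold 1 le_rfl hex.choose w hagree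
    rw [pow_one] at hhold1
    linarith [hmin, hGval, hhold1]
  -- for every "bad" symbol produce a preimage of z of depth K₀+1 with large Birkhoff sum
  have key2 : ∀ i : ℕ, ∃ y : ShiftSpace M,
      (∃ x : ShiftSpace M, x.1 0 = i ∧ B < A x) →
      y.1 0 = i ∧ (shiftMap M)^[K₀ + 1] y = z ∧
        B - H * lam + (K₀ : ℝ) * m < birkhoff M A (K₀ + 1) y := by
    intro i
    by_cases h : ∃ x : ShiftSpace M, x.1 0 = i ∧ B < A x
    case neg => exact ⟨z, fun hx => absurd hx h⟩
    obtain ⟨x, hx0, hxA⟩ := h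
    obtain ⟨p, hp0, hpK, hpF, hpM⟩ :=
      hprim i (hx0 ▸ mem_BInf_of_shift M x) (z.1 0) (mem_BInf_of_shift M z)
    set q : ℕ → ℕ := fun j => if j < K₀ + 1 then p j else z.1 (j - (K₀ + 1)) with hq
    have hqs : InShift M q := by
      intro j
      by_cases h1 : j + 1 < K₀ + 1
      · have h0 : j < K₀ + 1 := by omega
        have : q j = p j := by rw [hq]; simp [h0]
        have h2 : q (j + 1) = p (j + 1) := by rw [hq]; simp [h1]
        rw [this, h2]
        exact hpM j (by omega)
      by_cases h2 : j + 1 = K₀ + 1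
      · have h0 : j < K₀ + 1 := by omega
        have e1 : q j = p j := by rw [hq]; simp [h0]
        have e2 : q (j + 1) = z.1 0 := by
          rw [hq]; simp only [if_neg h1]; exact congrArg z.1 (by omega)
        rw [e1, e2, ← hpK, ← h2]
        exact hpM j (by omega)
      · have h0 : ¬ j < K₀ + 1 := by omega
        have e1 : q j = z.1 (j - (K₀ + 1)) := by rw [hq]; simp [h0]
        have e2 : q (j + 1) = z.1 (j - (K₀ + 1) + 1) := by
          rw [hq]; simp only [if_neg h1]; exact congrArg z.1 (by omega)
        rw [e1, e2]
        exact z.2 _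
    set y : ShiftSpace M := ⟨q, hqs⟩ with hy
    have hy0 : y.1 0 = i := by
      show q 0 = i
      rw [hq]; simp only [if_pos (Nat.succ_pos K₀)]; exact hp0
    have hycoord : ∀ j, y.1 j = q j := fun j => rfl
    have hyz : (shiftMap M)^[K₀ + 1] y = z := by
      apply Subtype.ext
      funext j
      rw [shift_iter_coord]
      show q (j + (K₀ + 1)) = z.1 j
      rw [hq]
      simp only [if_neg (by omega : ¬ j + (K₀ + 1) < K₀ + 1)]
      exact congrArg z.1 (by omega)
    refine ⟨y, fun _ => ⟨hy0, hyz, ?_⟩⟩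
    have hAy : B - H * lam < A y := by
      have hagree : Agree M 1 x y := by
        intro j hj
        interval_cases j
        rw [hx0, hy0]
      have := hhold 1 le_rfl x y hagree
      rw [pow_one] at this
      linarith
    have hsum : (K₀ : ℝ) * m ≤
        ∑ t ∈ Finset.range K₀, A ((shiftMap M)^[t + 1] y) := by
      have hlow : ∀ t ∈ Finset.range K₀, m ≤ A ((shiftMap M)^[t + 1] y) := by
        intro t ht
        have ht' : t < K₀ := Finset.mem_range.mp ht
        apply hm
        show ((shiftMap M)^[t + 1] y).1 0 ∈ F
        rw [shift_iter_coord]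
        show q (0 + (t + 1)) ∈ F
        rw [hq]
        simp only [if_pos (by omega : 0 + (t + 1) < K₀ + 1)]
        have : 0 + (t + 1) = t + 1 := by omega
        rw [this]
        exact hpF (t + 1) (by omega) (by omega)
      have := Finset.card_nsmul_le_sum (Finset.range K₀)
        (fun t => A ((shiftMap M)^[t + 1] y)) m hlow
      simpa [nsmul_eq_mul] using this
    have hbirk : birkhoff M A (K₀ + 1) y
        = A y + ∑ t ∈ Finset.range K₀, A ((shiftMap M)^[t + 1] y) := by
      unfold birkhoff
      rw [Finset.sum_range_succ']
      simp [add_comm]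
    rw [hbirk]
    linarith
  choose Y hY using key2
  -- the set of bad symbols is finite
  have hBadfin : {i : ℕ | ∃ x : ShiftSpace M, x.1 0 = i ∧ B < A x}.Finite := by
    by_contra hinf
    set D : ℝ := C ^ (K₀ + 1) * Real.exp (-(B - H * lam + (K₀ : ℝ) * m)) with hD
    obtain ⟨t, hts, htc⟩ :=
      Set.Infinite.exists_subset_card_eq hinf (⌈D⌉₊ + 1)
    have hYfirst : ∀ i ∈ t, (Y i).1 0 = i := fun i hi => (hY i (hts hi)).1
    have hinj : Set.InjOn Y ↑t := by
      intro a ha b hb hab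
      rw [← hYfirst a ha, ← hYfirst b hb, hab]
    have hcard : (t.image Y).card = ⌈D⌉₊ + 1 := by
      rw [Finset.card_image_of_injOn hinj, htc]
    have hmapsz : ∀ y ∈ t.image Y, (shiftMap M)^[K₀ + 1] y = z := by
      intro y hy
      obtain ⟨i, hi, rfl⟩ := Finset.mem_image.mp hy
      exact (hY i (hts hi)).2.1
    have hup := sum_exp_birkhoff_le M A C hC0 hL (K₀ + 1) z (t.image Y) hmapsz
    have hlo : ∀ y ∈ t.image Y,
        Real.exp (B - H * lam + (K₀ : ℝ) * m) ≤ Real.exp (birkhoff M A (K₀ + 1) y) := by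
      intro y hy
      obtain ⟨i, hi, rfl⟩ := Finset.mem_image.mp hy
      exact Real.exp_le_exp.mpr ((hY i (hts hi)).2.2).le
    have hns := Finset.card_nsmul_le_sum (t.image Y) _ _ hlo
    rw [hcard, nsmul_eq_mul] at hns
    push_cast at hns
    have hE : (0 : ℝ) < Real.exp (B - H * lam + (K₀ : ℝ) * m) := Real.exp_pos _
    have hDE : D * Real.exp (B - H * lam + (K₀ : ℝ) * m) = C ^ (K₀ + 1) := by
      rw [hD, Real.exp_neg]
      field_simp
    have hceil : D ≤ (⌈D⌉₊ : ℝ) := Nat.le_ceil D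
    nlinarith [hns.trans hup, hE, hDE, hceil]
  obtain ⟨N, hN⟩ := hBadfin.bddAbove
  refine ⟨N + 1, fun i hi x hx0 => ?_⟩
  by_contra hcon
  have : i ∈ {i : ℕ | ∃ x : ShiftSpace M, x.1 0 = i ∧ B < A x} :=
    ⟨x, hx0, lt_of_not_ge hcon⟩
  have := hN this
  omega
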